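/- For every ρ > 0, the function f_ρ is convex on ℝ. -/

import Mathlib

/-- The smoothed absolute value `f_ρ`. -/
noncomputable def smoothAbs (ρ : ℝ) (v : ℝ) : ℝ :=
  if ρ ≤ |v| then |v| else ρ / 3 + (v ^ 2 / ρ ^ 2) * (ρ - |v| / 3)

/-- derivative of `v * |v|`. -/
lemma hasDerivAt_mul_abs (x : ℝ) : HasDerivAt (fun v : ℝ => v * |v|) (2 * |x|) x := by
  rcases lt_trichotomy x 0 with h | h | h
  · have : HasDerivAt (fun v : ℝ => -(v * v)) (2 * |x|) x := by
      have := ((hasDerivAt_id x).fun_mul (hasDerivAt_id x)).fun_neg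
      simpa [abs_of_neg h, two_mul] using this
    refine this.congr_of_eventuallyEq ?_
    filter_upwards [eventually_lt_nhds h] with v hv
    simp [abs_of_neg hv]
  · subst h
    rw [hasDerivAt_iff_tendsto_slope]
    simp only [abs_zero, mul_zero]
    have h1 : (fun v : ℝ => |v|) =ᶠ[nhdsWithin 0 {(0:ℝ)}ᶜ] slope (fun v : ℝ => v * |v|) 0 := by
      filter_upwards [self_mem_nhdsWithin] with v hv
      have hv0 : v ≠ 0 := hv
      rw [slope_def_field]
      simp only [zero_mul, abs_zero, sub_zero, mul_zero]
      rw [eq_div_iff hv0]; ring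
    refine Filter.Tendsto.congr' h1 ?_
    have h2 : Filter.Tendsto (fun v : ℝ => |v|) (nhds 0) (nhds 0) := by
      simpa using continuous_abs.tendsto (0:ℝ)
    exact h2.mono_left nhdsWithin_le_nhds
  · have : HasDerivAt (fun v : ℝ => v * v) (2 * |x|) x := by
      have := (hasDerivAt_id x).fun_mul (hasDerivAt_id x)
      simpa [abs_of_pos h, two_mul] using this
    refine this.congr_of_eventuallyEq ?_
    filter_upwards [eventually_gt_nhds h] with v hv
    simp [abs_of_pos hv]

/-- The inner smooth piece. -/
noncomputable def innerFun (ρ : ℝ) (v : ℝ) : ℝ :=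
  ρ / 3 + (v ^ 2 / ρ ^ 2) * (ρ - |v| / 3)

lemma hasDerivAt_innerFun (ρ : ℝ) (hρ : 0 < ρ) (x : ℝ) :
    HasDerivAt (innerFun ρ) (2 * x / ρ - x * |x| / ρ ^ 2) x := by
  have hρ' : (ρ : ℝ) ≠ 0 := ne_of_gt hρ
  have h1 : HasDerivAt (fun v : ℝ => ρ / 3 + (v ^ 2 / ρ - v * (v * |v|) / (3 * ρ ^ 2)))
      (2 * x / ρ - x * |x| / ρ ^ 2) x := by
    have hsq : HasDerivAt (fun v : ℝ => v ^ 2 / ρ) (2 * x / ρ) x := by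
      simpa [mul_comm, mul_assoc] using ((hasDerivAt_pow 2 x).div_const ρ)
    have hcub : HasDerivAt (fun v : ℝ => v * (v * |v|)) (3 * (x * |x|)) x := by
      have := (hasDerivAt_id x).fun_mul (hasDerivAt_mul_abs x)
      convert this using 1
      · rfl
      · rfl
      · rfl
      simp only [id_eq, one_mul]
      ring
    have := (hsq.sub (hcub.div_const (3 * ρ ^ 2))).const_add (ρ / 3)
    convert this using 1
    · rfl
    · rfl
    · rfl
    · ring
  refine h1.congr_of_eventuallyEq ?_
  filter_upwards [] with v
  unfold innerFun
  field_simp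

lemma smoothAbs_eq_inner (ρ : ℝ) (hρ : 0 < ρ) {v : ℝ} (hv : |v| ≤ ρ) :
    smoothAbs ρ v = innerFun ρ v := by
  unfold smoothAbs innerFun
  rcases lt_or_eq_of_le hv with h | h
  · rw [if_neg (not_le.mpr h)]
  · have hv2 : v ^ 2 = ρ ^ 2 := by rw [← sq_abs, h]
    rw [if_pos h.ge, h, hv2]
    field_simp
    norm_num

/-- The derivative function. -/
noncomputable def gDeriv (ρ : ℝ) (x : ℝ) : ℝ :=
  if ρ ≤ |x| then (if 0 ≤ x then 1 else -1) else 2 * x / ρ - x * |x| / ρ ^ 2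

lemma hasDerivAt_smoothAbs (ρ : ℝ) (hρ : 0 < ρ) (x : ℝ) :
    HasDerivAt (smoothAbs ρ) (gDeriv ρ x) x := by
  have hρ' : (ρ : ℝ) ≠ 0 := ne_of_gt hρ
  rcases lt_trichotomy (|x|) ρ with h | h | h
  · -- inner region
    have hg : gDeriv ρ x = 2 * x / ρ - x * |x| / ρ ^ 2 := by
      unfold gDeriv; rw [if_neg (not_le.mpr h)]
    rw [hg]
    refine (hasDerivAt_innerFun ρ hρ x).congr_of_eventuallyEq ?_
    have hev : ∀ᶠ v in nhds x, |v| < ρ :=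
      (continuous_abs.continuousAt).eventually_lt continuousAt_const h
    filter_upwards [hev] with v hv
    exact smoothAbs_eq_inner ρ hρ hv.le
  · -- boundary : x = ρ or x = -ρ
    rcases (abs_eq (le_of_lt hρ)).mp h with h' | h'
    · -- x = ρ
      rw [h']
      have hg : gDeriv ρ ρ = 1 := by
        unfold gDeriv
        rw [if_pos (by rw [abs_of_pos hρ]), if_pos hρ.le]
      rw [hg]
      have hright : HasDerivWithinAt (smoothAbs ρ) 1 (Set.Ici ρ) ρ := by
        refine ((hasDerivAt_id' (x := ρ)).hasDerivWithinAt).congr ?_ ?_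
        · intro v hv
          have hv' : ρ ≤ v := hv
          unfold smoothAbs
          rw [if_pos (by rw [abs_of_pos (lt_of_lt_of_le hρ hv')]; exact hv'),
            abs_of_pos (lt_of_lt_of_le hρ hv')]
        · unfold smoothAbs
          rw [if_pos (by rw [abs_of_pos hρ]), abs_of_pos hρ]
      have hleft : HasDerivWithinAt (smoothAbs ρ) 1 (Set.Icc (-ρ) ρ) ρ := by
        have hd := hasDerivAt_innerFun ρ hρ ρ
        have heq : (2 * ρ / ρ - ρ * |ρ| / ρ ^ 2) = 1 := by
          rw [abs_of_pos hρ]; field_simp; ring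
        rw [heq] at hd
        refine hd.hasDerivWithinAt.congr ?_ ?_
        · intro v hv
          exact smoothAbs_eq_inner ρ hρ (abs_le.mpr ⟨hv.1, hv.2⟩)
        · exact smoothAbs_eq_inner ρ hρ (by rw [abs_of_pos hρ])
      have hu := hleft.union hright
      rw [Set.Icc_union_Ici_eq_Ici (by linarith : -ρ ≤ ρ)] at hu
      exact hu.hasDerivAt (Ici_mem_nhds (by linarith))
    · -- x = -ρ
      rw [h']
      have hg : gDeriv ρ (-ρ) = -1 := by
        unfold gDeriv
        rw [if_pos (by rw [abs_neg, abs_of_pos hρ]), if_neg (by simp; linarith)]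
      rw [hg]
      have hleft : HasDerivWithinAt (smoothAbs ρ) (-1) (Set.Iic (-ρ)) (-ρ) := by
        refine ((hasDerivAt_neg (-ρ)).hasDerivWithinAt).congr ?_ ?_
        · intro v hv
          have hv' : v ≤ -ρ := hv
          have hvneg : v < 0 := by linarith
          unfold smoothAbs
          rw [if_pos (by rw [abs_of_neg hvneg]; linarith), abs_of_neg hvneg]
        · unfold smoothAbs
          rw [if_pos (by rw [abs_neg, abs_of_pos hρ]), abs_neg, abs_of_pos hρ, neg_neg]
      have hright : HasDerivWithinAt (smoothAbs ρ) (-1) (Set.Icc (-ρ) ρ) (-ρ) := by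
        have hd := hasDerivAt_innerFun ρ hρ (-ρ)
        have heq : (2 * (-ρ) / ρ - (-ρ) * |(-ρ)| / ρ ^ 2) = -1 := by
          rw [abs_neg, abs_of_pos hρ]; field_simp; ring
        rw [heq] at hd
        refine hd.hasDerivWithinAt.congr ?_ ?_
        · intro v hv
          exact smoothAbs_eq_inner ρ hρ (abs_le.mpr ⟨hv.1, hv.2⟩)
        · exact smoothAbs_eq_inner ρ hρ (by rw [abs_neg, abs_of_pos hρ])
      have hu := hleft.union hright
      rw [Set.Iic_union_Icc_eq_Iic (by linarith : -ρ ≤ ρ)] at hu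
      exact hu.hasDerivAt (Iic_mem_nhds (by linarith))
  · -- outer region
    have hg : gDeriv ρ x = if 0 ≤ x then 1 else -1 := by
      unfold gDeriv; rw [if_pos h.le]
    rw [hg]
    rcases le_or_gt 0 x with hx | hx
    · rw [if_pos hx]
      have hxρ : ρ < x := by rwa [abs_of_nonneg hx] at h
      refine ((hasDerivAt_id' (x := x)).congr_of_eventuallyEq ?_)
      filter_upwards [eventually_gt_nhds hxρ] with v hv
      have hv0 : 0 < v := lt_trans hρ hv
      unfold smoothAbs
      rw [if_pos (by rw [abs_of_pos hv0]; linarith), abs_of_pos hv0]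
    · rw [if_neg (not_le.mpr hx)]
      have hxρ : x < -ρ := by rw [abs_of_neg hx] at h; linarith
      refine ((hasDerivAt_neg x).congr_of_eventuallyEq ?_)
      filter_upwards [eventually_lt_nhds hxρ] with v hv
      have hv0 : v < 0 := by linarith
      unfold smoothAbs
      rw [if_pos (by rw [abs_of_neg hv0]; linarith), abs_of_neg hv0]

lemma monotone_gDeriv (ρ : ℝ) (hρ : 0 < ρ) : Monotone (gDeriv ρ) := by
  have hρ' : (ρ : ℝ) ≠ 0 := ne_of_gt hρ
  have hρ2 : (0:ℝ) < ρ ^ 2 := by positivity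
  have key : ∀ u w : ℝ, u ≤ w → |u| ≤ ρ → |w| ≤ ρ →
      2 * u / ρ - u * |u| / ρ ^ 2 ≤ 2 * w / ρ - w * |w| / ρ ^ 2 := by
    intro u w huw hu hw
    have e1 : 2 * u / ρ - u * |u| / ρ ^ 2 = (2 * u * ρ - u * |u|) / ρ ^ 2 := by
      field_simp
    have e2 : 2 * w / ρ - w * |w| / ρ ^ 2 = (2 * w * ρ - w * |w|) / ρ ^ 2 := by
      field_simp
    rw [e1, e2, div_le_div_iff₀ hρ2 hρ2]
    have base : 2 * u * ρ - u * |u| ≤ 2 * w * ρ - w * |w| := by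
      rcases abs_cases u with ⟨hu1, hu2⟩ | ⟨hu1, hu2⟩ <;>
        rcases abs_cases w with ⟨hw1, hw2⟩ | ⟨hw1, hw2⟩ <;>
        rw [hu1] at hu ⊢ <;> rw [hw1] at hw ⊢
      · nlinarith [mul_nonneg (sub_nonneg.2 huw) (show (0:ℝ) ≤ 2*ρ - u - w by linarith)]
      · linarith
      · nlinarith [mul_nonneg (show (0:ℝ) ≤ -u by linarith) (show (0:ℝ) ≤ 2*ρ + u by linarith),
          mul_nonneg hw2 (show (0:ℝ) ≤ 2*ρ - w by linarith)]
      · nlinarith [mul_nonneg (sub_nonneg.2 huw) (show (0:ℝ) ≤ 2*ρ + u + w by linarith)]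
    nlinarith [base, hρ2]
  have bound : ∀ u : ℝ, |u| ≤ ρ → -1 ≤ 2 * u / ρ - u * |u| / ρ ^ 2 ∧
      2 * u / ρ - u * |u| / ρ ^ 2 ≤ 1 := by
    intro u hu
    have hn : -ρ ≤ u := (abs_le.mp hu).1
    have hp : u ≤ ρ := (abs_le.mp hu).2
    constructor
    · have h1 := key (-ρ) u hn (by rw [abs_neg, abs_of_pos hρ]) hu
      have heq : 2 * (-ρ) / ρ - (-ρ) * |(-ρ)| / ρ ^ 2 = -1 := by
        rw [abs_neg, abs_of_pos hρ]; field_simp; ring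
      linarith [heq ▸ h1]
    · have h1 := key u ρ hp hu (by rw [abs_of_pos hρ])
      have heq : 2 * ρ / ρ - ρ * |ρ| / ρ ^ 2 = 1 := by
        rw [abs_of_pos hρ]; field_simp; ring
      linarith [heq ▸ h1]
  intro a b hab
  unfold gDeriv
  by_cases ha : ρ ≤ |a| <;> by_cases hb : ρ ≤ |b|
  · rw [if_pos ha, if_pos hb]
    by_cases ha0 : 0 ≤ a
    · rw [if_pos ha0, if_pos (le_trans ha0 hab)]
    · rw [if_neg ha0]
      split_ifs <;> norm_num
  · -- a outer, b inner
    rw [if_pos ha, if_neg hb]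
    have hb' : |b| ≤ ρ := (not_le.mp hb).le
    have ha0 : ¬ 0 ≤ a := by
      intro h0
      have : ρ ≤ a := by rwa [abs_of_nonneg h0] at ha
      have : ρ ≤ b := le_trans this hab
      exact hb (le_trans this (le_abs_self b))
    rw [if_neg ha0]
    exact (bound b hb').1
  · -- a inner, b outer
    rw [if_neg ha, if_pos hb]
    have ha' : |a| ≤ ρ := (not_le.mp ha).le
    have hb0 : 0 ≤ b := by
      by_contra h0
      push_neg at h0
      have : ρ ≤ -b := by rwa [abs_of_neg h0] at hb
      have : a ≤ -ρ := by linarith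
      have : ρ ≤ |a| := by rw [abs_le] at ha'; rcases ha' with ⟨h1, _⟩; linarith [neg_abs_le a, le_abs_self a]
      exact ha this
    rw [if_pos hb0]
    exact (bound a ha').2
  · rw [if_neg ha, if_neg hb]
    exact key a b hab (not_le.mp ha).le (not_le.mp hb).le

theorem smoothAbs_convex (ρ : ℝ) (hρ : 0 < ρ) :
    ConvexOn ℝ Set.univ (smoothAbs ρ) := by
  have hd := hasDerivAt_smoothAbs ρ hρ
  have hderiv : deriv (smoothAbs ρ) = gDeriv ρ := funext fun x => (hd x).deriv
  refine MonotoneOn.convexOn_of_deriv convex_univ ?_ ?_ ?_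
  · exact fun x _ => (hd x).continuousAt.continuousWithinAt
  · intro x _
    exact (hd x).differentiableAt.differentiableWithinAt
  · rw [interior_univ, hderiv]
    exact (monotone_gDeriv ρ hρ).monotoneOn _
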